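/- Let n ≥ 2 and let m : ℝⁿ∖{0} → ℝⁿ be even and 0-homogeneous. Let ξ₀ ∈ S^{n−1} and ρ ∈ (0,1) be such that m is C¹, with Lipschitz constant L, on the closed conical neighborhood {ξ ≠ 0 : |ξ/|ξ| − ξ₀| ≤ ρ or |ξ/|ξ| + ξ₀| ≤ ρ}. Then there exists a constant C (depending only on L, ρ) such that for every R > 0, every δ ∈ (0, ρ/(4R)], and every zero-mean trigonometric polynomial θ on 𝕋ⁿ whose nonzero Fourier frequencies k ∈ ℤⁿ all satisfy |δk − ξ₀| < δR or |δk + ξ₀| < δR, one has ‖T[θ] − m(ξ₀)θ‖_{L^∞(𝕋ⁿ)} ≤ C R δ Σ_{k∈ℤⁿ} |θ̂(k)|, where T is the Fourier multiplier with symbol m, i.e. (T[θ])^(k) = m(k)θ̂(k). -/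

import Mathlib

open MeasureTheory Real

noncomputable section

/-- Euclidean space `ℝⁿ`. -/
abbrev E (n : ℕ) := EuclideanSpace ℝ (Fin n)

/-- An integer frequency `k ∈ ℤⁿ` viewed as a vector of `ℝⁿ`. -/
def intVec {n : ℕ} (k : Fin n → ℤ) : E n := WithLp.toLp 2 (fun i => (k i : ℝ))

/-- Build a vector of `ℂⁿ` from coordinates. -/
def toEC {n : ℕ} (f : Fin n → ℂ) : EuclideanSpace ℂ (Fin n) := WithLp.toLp 2 f

/-- The closed conical `ρ`-neighborhood of the line `ℝξ₀`. -/
def coneNbhd {n : ℕ} (ξ₀ : E n) (ρ : ℝ) : Set (E n) :=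
  {ξ | ξ ≠ 0 ∧ (‖‖ξ‖⁻¹ • ξ - ξ₀‖ ≤ ρ ∨ ‖‖ξ‖⁻¹ • ξ + ξ₀‖ ≤ ρ)}

lemma norm_toEC_ofReal {n : ℕ} (v : E n) :
    ‖toEC (fun i => ((v i : ℝ) : ℂ))‖ = ‖v‖ := by
  rw [EuclideanSpace.norm_eq, EuclideanSpace.norm_eq]
  congr 1
  exact Finset.sum_congr rfl (fun i _ => by simp [toEC])

lemma euc_sum_apply {n : ℕ} {ι : Type*} (S : Finset ι)
    (f : ι → EuclideanSpace ℂ (Fin n)) (i : Fin n) :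
    (∑ k ∈ S, f k) i = ∑ k ∈ S, f k i := by
  induction S using Finset.cons_induction with
  | empty => rfl
  | cons a s ha ih => rw [Finset.sum_cons, Finset.sum_cons, PiLp.add_apply, ih]

lemma mem_cone_of_close {n : ℕ} {ξ₀ : E n} (hξ : ‖ξ₀‖ = 1) {ρ : ℝ}
    (hρ : ρ ∈ Set.Ioo (0:ℝ) 1) {w : E n} (hw : ‖w - ξ₀‖ ≤ ρ / 4) :
    w ∈ coneNbhd ξ₀ ρ := by
  have h1 : |‖w‖ - ‖ξ₀‖| ≤ ‖w - ξ₀‖ := abs_norm_sub_norm_le w ξ₀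
  have hwn : 0 < ‖w‖ := by
    rw [hξ] at h1
    have := abs_le.mp h1
    linarith [hρ.2]
  refine ⟨norm_pos_iff.mp hwn, Or.inl ?_⟩
  have h2 : ‖‖w‖⁻¹ • w - w‖ = |1 - ‖w‖| := by
    have : ‖w‖⁻¹ • w - w = (‖w‖⁻¹ - 1) • w := by rw [sub_smul, one_smul]
    rw [this, norm_smul, Real.norm_eq_abs, ← abs_of_pos hwn, ← abs_mul]
    congr 1
    simp only [abs_norm]
    rw [sub_mul, inv_mul_cancel₀ hwn.ne', one_mul]
  calc ‖‖w‖⁻¹ • w - ξ₀‖ ≤ ‖‖w‖⁻¹ • w - w‖ + ‖w - ξ₀‖ :=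
        norm_sub_le_norm_sub_add_norm_sub _ _ _
    _ ≤ ρ / 4 + ρ / 4 := by
        refine add_le_add ?_ hw
        rw [h2]
        calc |1 - ‖w‖| = |‖w‖ - ‖ξ₀‖| := by rw [hξ, abs_sub_comm]
          _ ≤ ‖w - ξ₀‖ := h1
          _ ≤ ρ / 4 := hw
    _ ≤ ρ := by linarith [hρ.1]

lemma key_estimate {L : NNReal} {ρ : ℝ} (hρ : ρ ∈ Set.Ioo (0:ℝ) 1) {n : ℕ}
    {m : E n → E n} {ξ₀ : E n} (hξ : ‖ξ₀‖ = 1)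
    (heven : ∀ ξ : E n, ξ ≠ 0 → m (-ξ) = m ξ)
    (hhom : ∀ (r : ℝ), 0 < r → ∀ ξ : E n, ξ ≠ 0 → m (r • ξ) = m ξ)
    (hLip : LipschitzOnWith L m (coneNbhd ξ₀ ρ))
    {R δ : ℝ} (hδ : 0 < δ) (hδR : δ * R ≤ ρ / 4) {v : E n}
    (hv : ‖δ • v - ξ₀‖ < δ * R ∨ ‖δ • v + ξ₀‖ < δ * R) :
    ‖m v - m ξ₀‖ ≤ L * (δ * R) := by
  have hξ0 : ξ₀ ∈ coneNbhd ξ₀ ρ :=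
    mem_cone_of_close hξ hρ (by rw [sub_self, norm_zero]; linarith [hρ.1])
  have hv0 : v ≠ 0 := by
    rintro rfl
    simp only [smul_zero, zero_sub, zero_add, norm_neg, hξ] at hv
    rcases hv with h | h <;> linarith [hρ.2]
  have hδv : δ • v ≠ 0 := smul_ne_zero hδ.ne' hv0
  have hmv : m (δ • v) = m v := hhom δ hδ v hv0
  rcases hv with h | h
  · have hw : δ • v ∈ coneNbhd ξ₀ ρ := mem_cone_of_close hξ hρ (h.le.trans hδR)
    have := hLip.dist_le_mul _ hw _ hξ0
    rw [dist_eq_norm, dist_eq_norm, hmv] at this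
    exact this.trans (by gcongr)
  · have hnorm : ‖-(δ • v) - ξ₀‖ = ‖δ • v + ξ₀‖ := by
      rw [show -(δ • v) - ξ₀ = -(δ • v + ξ₀) by abel, norm_neg]
    have hw : -(δ • v) ∈ coneNbhd ξ₀ ρ :=
      mem_cone_of_close hξ hρ (by rw [hnorm]; exact h.le.trans hδR)
    have := hLip.dist_le_mul _ hw _ hξ0
    rw [dist_eq_norm, dist_eq_norm, heven _ hδv, hmv, hnorm] at this
    exact this.trans (by gcongr)

/-- If the even, `0`-homogeneous symbol `m` is Lipschitz with constant
`L` on a closed conical `ρ`-neighborhood of `±ξ₀`, then there is `C = C(L,ρ) > 0` such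
that for every `R > 0`, `δ ∈ (0, ρ/(4R)]`, and every zero-mean trigonometric polynomial
`θ = Σ_{k∈S} c_k e^{ik·x}` whose frequencies satisfy `|δk - ξ₀| < δR` or `|δk + ξ₀| < δR`,
one has `‖T[θ] - m(ξ₀)θ‖_{L^∞} ≤ C R δ Σ_k |c_k|`. -/
theorem multiplier_cone_estimate (L : NNReal) (ρ : ℝ) (hρ : ρ ∈ Set.Ioo (0:ℝ) 1) :
    ∃ C : ℝ, 0 < C ∧
      ∀ (n : ℕ), 2 ≤ n → ∀ (m : E n → E n) (ξ₀ : E n),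
        ξ₀ ∈ Metric.sphere (0 : E n) 1 →
        (∀ ξ : E n, ξ ≠ 0 → m (-ξ) = m ξ) →
        (∀ (r : ℝ), 0 < r → ∀ ξ : E n, ξ ≠ 0 → m (r • ξ) = m ξ) →
        LipschitzOnWith L m (coneNbhd ξ₀ ρ) →
        ∀ (R : ℝ), 0 < R → ∀ (δ : ℝ), δ ∈ Set.Ioc (0:ℝ) (ρ / (4 * R)) →
        ∀ (S : Finset (Fin n → ℤ)) (c : (Fin n → ℤ) → ℂ),
          (0 : Fin n → ℤ) ∉ S →
          (∀ k ∈ S, ‖δ • intVec k - ξ₀‖ < δ * R ∨ ‖δ • intVec k + ξ₀‖ < δ * R) →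
          ∀ x : E n,
            ‖(toEC fun i => ∑ k ∈ S, (m (intVec k) i : ℂ) * c k *
                  Complex.exp (Complex.I * (∑ j, (k j : ℂ) * (x j : ℂ))))
              - (∑ k ∈ S, c k *
                  Complex.exp (Complex.I * (∑ j, (k j : ℂ) * (x j : ℂ))))
                • (toEC fun i => (m ξ₀ i : ℂ))‖
            ≤ C * R * δ * ∑ k ∈ S, ‖c k‖ := by
  refine ⟨(L : ℝ) + 1, by positivity, ?_⟩
  intro n hn m ξ₀ hξ heven hhom hLip R hR δ hδ S c hS hfreq x
  have hξn : ‖ξ₀‖ = 1 := by simpa using mem_sphere_zero_iff_norm.mp hξ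
  have hδR : δ * R ≤ ρ / 4 := by
    have h := hδ.2
    rw [le_div_iff₀ (by positivity)] at h
    nlinarith
  set e : (Fin n → ℤ) → ℂ := fun k =>
    c k * Complex.exp (Complex.I * (∑ j, (k j : ℂ) * (x j : ℂ))) with he
  have habs : ∀ k, ‖e k‖ = ‖c k‖ := by
    intro k
    have hre : Complex.I * (∑ j, (k j : ℂ) * (x j : ℂ))
        = Complex.I * (((∑ j, (k j : ℝ) * x j : ℝ)) : ℂ) := by push_cast; ring
    rw [he]
    simp [hre, Complex.norm_exp, map_mul]
  have hdiff : (toEC fun i => ∑ k ∈ S, (m (intVec k) i : ℂ) * c k *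
                  Complex.exp (Complex.I * (∑ j, (k j : ℂ) * (x j : ℂ))))
              - (∑ k ∈ S, c k *
                  Complex.exp (Complex.I * (∑ j, (k j : ℂ) * (x j : ℂ))))
                • (toEC fun i => (m ξ₀ i : ℂ))
      = ∑ k ∈ S, e k • toEC (fun i => ((m (intVec k) i - m ξ₀ i : ℝ) : ℂ)) := by
    ext i
    rw [euc_sum_apply]
    simp only [toEC, PiLp.sub_apply, PiLp.smul_apply, smul_eq_mul, he]
    rw [Finset.sum_mul, ← Finset.sum_sub_distrib]
    refine Finset.sum_congr rfl fun k hk => ?_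
    push_cast
    ring
  rw [hdiff]
  have hterm : ∀ k ∈ S, ‖e k • toEC (fun i => ((m (intVec k) i - m ξ₀ i : ℝ) : ℂ))‖
      ≤ ((L : ℝ) * (δ * R)) * ‖c k‖ := by
    intro k hk
    rw [norm_smul, habs k]
    have hfun : (fun i => ((m (intVec k) i - m ξ₀ i : ℝ) : ℂ))
        = fun i => (((m (intVec k) - m ξ₀) i : ℝ) : ℂ) := by
      funext i; rw [PiLp.sub_apply]
    rw [hfun, norm_toEC_ofReal, mul_comm]
    have hkey := key_estimate (L := L) hρ hξn heven hhom hLip hδ.1 hδR (hfreq k hk)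
    exact mul_le_mul_of_nonneg_right hkey (norm_nonneg _)
  calc ‖∑ k ∈ S, e k • toEC (fun i => ((m (intVec k) i - m ξ₀ i : ℝ) : ℂ))‖
      ≤ ∑ k ∈ S, ‖e k • toEC (fun i => ((m (intVec k) i - m ξ₀ i : ℝ) : ℂ))‖ :=
        norm_sum_le _ _
    _ ≤ ∑ k ∈ S, ((L : ℝ) * (δ * R)) * ‖c k‖ :=
        Finset.sum_le_sum hterm
    _ = ((L : ℝ) * (δ * R)) * ∑ k ∈ S, ‖c k‖ := by
        rw [Finset.mul_sum]
    _ ≤ ((L : ℝ) + 1) * R * δ * ∑ k ∈ S, ‖c k‖ := by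
        have hsum : 0 ≤ ∑ k ∈ S, ‖c k‖ :=
          Finset.sum_nonneg fun k _ => norm_nonneg _
        have : (L : ℝ) * (δ * R) ≤ ((L : ℝ) + 1) * R * δ := by
          nlinarith [hδ.1, hR, L.2]
        exact mul_le_mul_of_nonneg_right this hsum
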